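/- For every integer m ≥ 2, there exists a finite vertex set V and a system of m trees T_1, …, T_m on V (connected acyclic simple graphs on V), each of maximum degree at most 2^(2^(m-1)), that has no cooperative coloring. -/

import Mathlib

/-- A set of vertices is independent in the graph `G`:
no two of its vertices are adjacent. -/
def IndepIn {V : Type*} (G : SimpleGraph V) (I : Set V) : Prop :=
  ∀ ⦃u⦄, u ∈ I → ∀ ⦃v⦄, v ∈ I → ¬ G.Adj u v

/-- `(I j)` is a cooperative coloring for the system `G` of graphs:
each `I j` is independent in `G j` and the sets `I j` cover all vertices. -/
def IsCoopColoring {V : Type*} {m : ℕ} (G : Fin m → SimpleGraph V)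
    (I : Fin m → Set V) : Prop :=
  (∀ j, IndepIn (G j) (I j)) ∧ (⋃ j, I j) = Set.univ

/-- The system `G` of graphs has a cooperative coloring. -/
def HasCoopColoring {V : Type*} {m : ℕ} (G : Fin m → SimpleGraph V) : Prop :=
  ∃ I : Fin m → Set V, IsCoopColoring G I

/-- The maximum degree of a graph on a finite vertex set. -/
noncomputable def maxDeg {V : Type*} [Fintype V] (G : SimpleGraph V) : ℕ :=
  Finset.univ.sup fun v => (G.neighborSet v).ncard

/- ### Auxiliary development -/

/-- Graph determined by a parent function. -/
def treeGraph {V : Type*} (p : V → V) : SimpleGraph V where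
  Adj x y := x ≠ y ∧ (p x = y ∨ p y = x)
  symm := by constructor; intro x y ⟨h1, h2⟩; exact ⟨h1.symm, h2.symm⟩
  loopless := by constructor; intro x ⟨h, _⟩; exact h rfl

section TreeLemmas

variable {N : ℕ} (p : Fin (N + 1) → Fin (N + 1))
variable (h0 : p 0 = 0) (hlt : ∀ v, v ≠ 0 → ((p v : ℕ)) < (v : ℕ))

include h0 hlt in
lemma parent_le : ∀ v : Fin (N + 1), ((p v : ℕ)) ≤ (v : ℕ) := by
  intro v
  by_cases h : v = 0
  · subst h; rw [h0]
  · exact le_of_lt (hlt v h)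

include h0 hlt in
lemma iter_parent_le : ∀ (j : ℕ) (v : Fin (N + 1)), ((p^[j] v : ℕ)) ≤ (v : ℕ) := by
  intro j
  induction j with
  | zero => intro v; simp
  | succ j ih =>
    intro v
    rw [Function.iterate_succ_apply]
    exact le_trans (ih (p v)) (parent_le p h0 hlt v)

omit h0 in
include hlt in
lemma treeGraph_reach : ∀ v, (treeGraph p).Reachable 0 v := by
  have key : ∀ (t : ℕ) (v : Fin (N + 1)), (v : ℕ) ≤ t → (treeGraph p).Reachable 0 v := by
    intro t
    induction t with
    | zero =>
      intro v hv
      have : v = 0 := by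
        apply Fin.ext; simpa using hv
      rw [this]
    | succ t ih =>
      intro v hv
      by_cases h : v = 0
      · rw [h]
      · have h1 := hlt v h
        have h2 := ih (p v) (by omega)
        exact h2.trans (SimpleGraph.Adj.reachable ⟨by intro hc; rw [hc] at h1; omega, Or.inr rfl⟩)
  intro v; exact key v v le_rfl

include h0 hlt in
lemma treeGraph_bridge_walk (a b : Fin (N + 1)) (hab : a ≠ b) (hpa : p a = b) :
    ∀ w : (treeGraph p).Walk a b, s(a, b) ∈ w.edges := by
  have key : ∀ (x y : Fin (N + 1)) (w : (treeGraph p).Walk x y),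
      s(a, b) ∉ w.edges → (∃ j, p^[j] x = a) → ∃ j, p^[j] y = a := by
    intro x y w
    induction w with
    | nil => intro _ h; exact h
    | @cons x x' y hadj w ih =>
      intro hne hx
      rw [SimpleGraph.Walk.edges_cons, List.mem_cons] at hne
      push_neg at hne
      obtain ⟨hne1, hne2⟩ := hne
      apply ih hne2
      obtain ⟨hxx', hor⟩ := hadj
      rcases hor with h1 | h2
      · obtain ⟨j, hj⟩ := hx
        match j, hj with
        | 0, hj =>
          exfalso
          simp only [Function.iterate_zero, id] at hj
          subst hj
          rw [h1] at hpa
          exact hne1 (by rw [hpa])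
        | (j' + 1), hj =>
          rw [Function.iterate_succ_apply, h1] at hj
          exact ⟨j', hj⟩
      · obtain ⟨j, hj⟩ := hx
        exact ⟨j + 1, by rw [Function.iterate_succ_apply, h2, hj]⟩
  intro w
  by_contra hne
  obtain ⟨j, hj⟩ := key a b w hne ⟨0, rfl⟩
  have h1 : ((p^[j] b : ℕ)) ≤ (b : ℕ) := iter_parent_le p h0 hlt j b
  have ha0 : a ≠ 0 := by
    intro h
    subst h
    rw [h0] at hpa
    exact hab hpa
  have hba : (b : ℕ) < (a : ℕ) := hpa ▸ hlt a ha0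
  rw [hj] at h1
  omega

include h0 hlt in
lemma treeGraph_isTree : (treeGraph p).IsTree := by
  constructor
  · have : Nonempty (Fin (N + 1)) := ⟨0⟩
    exact SimpleGraph.Connected.mk
      (fun u v => ((treeGraph_reach p hlt u).symm).trans (treeGraph_reach p hlt v))
  · rw [SimpleGraph.isAcyclic_iff_forall_adj_isBridge]
    intro v w hadj
    rw [SimpleGraph.isBridge_iff_adj_and_forall_walk_mem_edges]
    obtain ⟨hvw, h1 | h2⟩ := hadj
    · exact treeGraph_bridge_walk p h0 hlt v w hvw h1
    · intro w'
      have := treeGraph_bridge_walk p h0 hlt w v hvw.symm h2 w'.reverse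
      rw [SimpleGraph.Walk.edges_reverse, List.mem_reverse] at this
      rwa [Sym2.eq_swap]

end TreeLemmas

/- ### degree helpers -/

lemma ncard_range_le {n : ℕ} {β : Type*} (g : Fin n → β) : (Set.range g).ncard ≤ n := by
  rw [← Set.image_univ]
  calc (g '' Set.univ).ncard ≤ (Set.univ : Set (Fin n)).ncard :=
        Set.ncard_image_le Set.finite_univ
    _ = n := by rw [Set.ncard_univ]; simp

lemma maxDeg_le_of_forall {V : Type*} [Fintype V] {G : SimpleGraph V} {D : ℕ}
    (h : ∀ v, (G.neighborSet v).ncard ≤ D) : maxDeg G ≤ D :=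
  Finset.sup_le fun v _ => h v

lemma ncard_neighborSet_le_maxDeg {V : Type*} [Fintype V] (G : SimpleGraph V) (v : V) :
    (G.neighborSet v).ncard ≤ maxDeg G :=
  Finset.le_sup (f := fun v => (G.neighborSet v).ncard) (Finset.mem_univ v)

lemma maxDeg_le_card {V : Type*} [Fintype V] (G : SimpleGraph V) :
    maxDeg G ≤ Fintype.card V :=
  maxDeg_le_of_forall fun v =>
    le_trans (Set.ncard_le_ncard (Set.subset_univ _) Set.finite_univ)
      (by rw [Set.ncard_univ, Nat.card_eq_fintype_card])

/- ### encoding infrastructure -/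

def umk (n : ℕ) (x : Fin (n*n+5*n+4+2)) : Fin (n+2) :=
  ⟨(x:ℕ) % (n+2), Nat.mod_lt _ (by omega)⟩

lemma div_bound {n : ℕ} (x : Fin (n*n+5*n+4+2)) : (x:ℕ)/(n+2) < n+3 := by
  have h := x.isLt
  exact (Nat.div_lt_iff_lt_mul (by omega)).2 (by nlinarith)

def encB (n : ℕ) (B : Fin (n+3)) (c : Fin (n+2)) : Fin (n*n+5*n+4+2) :=
  ⟨(c:ℕ) + (n+2)*(B:ℕ), by
    have h1 := c.isLt
    have h2 := B.isLt
    have h3 : (n+2)*(B:ℕ) ≤ (n+2)*(n+2) := Nat.mul_le_mul_left _ (by omega)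
    nlinarith⟩

lemma encB_val (n : ℕ) (B : Fin (n+3)) (c : Fin (n+2)) :
    ((encB n B c : ℕ)) = (c:ℕ) + (n+2)*(B:ℕ) := rfl

lemma encB_mod (n : ℕ) (B : Fin (n+3)) (c : Fin (n+2)) :
    ((encB n B c : ℕ)) % (n+2) = (c:ℕ) := by
  rw [encB_val, Nat.add_mul_mod_self_left, Nat.mod_eq_of_lt c.isLt]

lemma encB_div (n : ℕ) (B : Fin (n+3)) (c : Fin (n+2)) :
    ((encB n B c : ℕ)) / (n+2) = (B:ℕ) := by
  rw [encB_val, Nat.add_mul_div_left _ _ (by omega : 0 < n+2),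
    Nat.div_eq_of_lt c.isLt, zero_add]

lemma umk_encB (n : ℕ) (B : Fin (n+3)) (c : Fin (n+2)) : umk n (encB n B c) = c := by
  apply Fin.ext
  simpa [umk] using encB_mod n B c

def bridgeV (n : ℕ) (w : Fin (n+2)) : Fin (n*n+5*n+4+2) :=
  ⟨(n+2)*((w:ℕ)+1), by
    have h2 := w.isLt
    have h3 : (n+2)*((w:ℕ)+1) ≤ (n+2)*(n+2) := Nat.mul_le_mul_left _ (by omega)
    nlinarith⟩

/- ### the new parent maps -/

def qold (n : ℕ) (f : Fin (n+2) → Fin (n+2)) (x : Fin (n*n+5*n+4+2)) :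
    Fin (n*n+5*n+4+2) :=
  if (x:ℕ) < n+2 then ⟨(f (umk n x) : ℕ), by have := (f (umk n x)).isLt; omega⟩
  else if (x:ℕ) % (n+2) = 0 then ⟨0, by omega⟩
  else ⟨(f (umk n x) : ℕ) + (n+2) * ((x:ℕ)/(n+2)), by
    have h1 := (f (umk n x)).isLt
    have h2 := div_bound x
    have h3 : (n+2)*((x:ℕ)/(n+2)) ≤ (n+2)*(n+2) := Nat.mul_le_mul_left _ (by omega)
    nlinarith⟩

def qnew (n : ℕ) (x : Fin (n*n+5*n+4+2)) : Fin (n*n+5*n+4+2) :=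
  if (x:ℕ) < n+2 then ⟨(x:ℕ) - 1, by have := x.isLt; omega⟩
  else ⟨(x:ℕ)/(n+2) - 1, by
    have h1 := div_bound x
    have h2 := x.isLt
    omega⟩

lemma qold_val (n : ℕ) (f : Fin (n+2) → Fin (n+2)) (x : Fin (n*n+5*n+4+2)) :
    ((qold n f x : ℕ)) =
      if (x:ℕ) < n+2 then (f (umk n x) : ℕ)
      else if (x:ℕ) % (n+2) = 0 then 0
      else (f (umk n x) : ℕ) + (n+2) * ((x:ℕ)/(n+2)) := by
  unfold qold; split_ifs <;> rfl

lemma qnew_val (n : ℕ) (x : Fin (n*n+5*n+4+2)) :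
    ((qnew n x : ℕ)) =
      if (x:ℕ) < n+2 then (x:ℕ) - 1 else (x:ℕ)/(n+2) - 1 := by
  unfold qnew; split_ifs <;> rfl

lemma qold_zero (n : ℕ) (f : Fin (n+2) → Fin (n+2)) (hf : f 0 = 0) :
    qold n f 0 = 0 := by
  apply Fin.ext
  rw [qold_val]
  have h1 : ((0 : Fin (n*n+5*n+4+2)) : ℕ) = 0 := rfl
  rw [h1]
  rw [if_pos (by omega : (0:ℕ) < n+2)]
  have h2 : umk n 0 = 0 := by apply Fin.ext; simp [umk]
  rw [h2, hf]
  rfl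

lemma qnew_zero (n : ℕ) : qnew n 0 = 0 := by
  apply Fin.ext
  rw [qnew_val]
  simp

lemma qold_lt (n : ℕ) (f : Fin (n+2) → Fin (n+2))
    (hlt : ∀ v, v ≠ 0 → ((f v : ℕ)) < (v:ℕ)) :
    ∀ x, x ≠ 0 → ((qold n f x : ℕ)) < (x:ℕ) := by
  intro x hx
  have hx' : (x:ℕ) ≠ 0 := fun h => hx (Fin.ext h)
  rw [qold_val]
  split_ifs with h1 h2
  · have humk : (umk n x : ℕ) = (x:ℕ) := by simp [umk, Nat.mod_eq_of_lt h1]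
    have hne : umk n x ≠ 0 := by
      intro h; rw [h] at humk; exact hx' humk.symm
    have := hlt _ hne
    omega
  · omega
  · have humk : (umk n x : ℕ) = (x:ℕ) % (n+2) := rfl
    have huNe : umk n x ≠ 0 := by
      intro h
      apply h2
      rw [← humk, h]
      rfl
    have h3 := hlt _ huNe
    have h4 := Nat.mod_add_div (x:ℕ) (n+2)
    omega

lemma qnew_lt (n : ℕ) : ∀ x : Fin (n*n+5*n+4+2), x ≠ 0 → ((qnew n x : ℕ)) < (x:ℕ) := by
  intro x hx
  have hx' : (x:ℕ) ≠ 0 := fun h => hx (Fin.ext h)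
  rw [qnew_val]
  split_ifs with h1
  · omega
  · have := div_bound x
    omega
/- ### degree bounds -/

lemma qold_deg (n : ℕ) (f : Fin (n+2) → Fin (n+2)) (D : ℕ)
    (hdeg : maxDeg (treeGraph f) ≤ D) :
    maxDeg (treeGraph (qold n f)) ≤ D + (n+2) := by
  apply maxDeg_le_of_forall
  intro x
  by_cases hx : (x:ℕ) < n+2
  · -- blob 0 vertex
    have humk : (umk n x : ℕ) = (x:ℕ) := by simp [umk, Nat.mod_eq_of_lt hx]
    have hsub : (treeGraph (qold n f)).neighborSet x ⊆
        (encB n ⟨0, by omega⟩ '' (treeGraph f).neighborSet (umk n x)) ∪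
          Set.range (bridgeV n) := by
      rintro y ⟨hne, hor⟩
      rcases hor with hq | hq
      · left
        have hv : (y:ℕ) = (f (umk n x) : ℕ) := by
          rw [← hq, qold_val, if_pos hx]
        refine ⟨f (umk n x), ⟨?_, Or.inl rfl⟩, ?_⟩
        · intro hc
          have h1 := congrArg Fin.val hc
          rw [humk] at h1
          exact hne (Fin.ext (by omega))
        · apply Fin.ext
          rw [encB_val]
          show (f (umk n x) : ℕ) + (n+2) * 0 = (y:ℕ)
          omega
      · by_cases hy : (y:ℕ) < n+2
        · left
          have hv : (x:ℕ) = (f (umk n y) : ℕ) := by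
            rw [← hq, qold_val, if_pos hy]
          have humky : (umk n y : ℕ) = (y:ℕ) := by simp [umk, Nat.mod_eq_of_lt hy]
          refine ⟨umk n y, ⟨?_, Or.inr (Fin.ext (by omega))⟩, ?_⟩
          · intro hc
            have h1 := congrArg Fin.val hc
            rw [humk, humky] at h1
            exact hne (Fin.ext (by omega))
          · apply Fin.ext
            rw [encB_val]
            show (umk n y : ℕ) + (n+2) * 0 = (y:ℕ)
            omega
        · have hdy1 : 1 ≤ (y:ℕ)/(n+2) := (Nat.one_le_div_iff (by omega)).2 (by omega)
          by_cases hym : (y:ℕ) % (n+2) = 0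
          · right
            have hx0 : (x:ℕ) = 0 := by
              rw [← hq, qold_val, if_neg hy, if_pos hym]
            have hdyle : (y:ℕ)/(n+2) < n+3 := div_bound y
            refine ⟨⟨(y:ℕ)/(n+2) - 1, by omega⟩, ?_⟩
            apply Fin.ext
            show (n+2) * (((y:ℕ)/(n+2) - 1) + 1) = (y:ℕ)
            have h5 := Nat.mod_add_div (y:ℕ) (n+2)
            have h6 : ((y:ℕ)/(n+2) - 1) + 1 = (y:ℕ)/(n+2) := by omega
            rw [h6]
            omega
          · exfalso
            have hvv : (x:ℕ) = (f (umk n y):ℕ) + (n+2)*((y:ℕ)/(n+2)) := by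
              rw [← hq, qold_val, if_neg hy, if_neg hym]
            have h6 : (n+2)*1 ≤ (n+2)*((y:ℕ)/(n+2)) := Nat.mul_le_mul_left _ hdy1
            omega
    calc ((treeGraph (qold n f)).neighborSet x).ncard
        ≤ _ := Set.ncard_le_ncard hsub (Set.toFinite _)
      _ ≤ (encB n ⟨0, by omega⟩ '' (treeGraph f).neighborSet (umk n x)).ncard
            + (Set.range (bridgeV n)).ncard := Set.ncard_union_le _ _
      _ ≤ D + (n+2) := by
          apply add_le_add
          · exact le_trans (Set.ncard_image_le (Set.toFinite _))
              (le_trans (ncard_neighborSet_le_maxDeg _ _) hdeg)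
          · exact ncard_range_le _
  · -- vertex in blob ≥ 1
    have humk : (umk n x : ℕ) = (x:ℕ) % (n+2) := rfl
    have hbx : (x:ℕ)/(n+2) < n+3 := div_bound x
    have hb1 : 1 ≤ (x:ℕ)/(n+2) := (Nat.one_le_div_iff (by omega)).2 (by omega)
    have hmad := Nat.mod_add_div (x:ℕ) (n+2)
    have hsub : (treeGraph (qold n f)).neighborSet x ⊆
        (encB n ⟨(x:ℕ)/(n+2), hbx⟩ '' (treeGraph f).neighborSet (umk n x)) ∪
          {(0 : Fin (n*n+5*n+4+2))} := by
      rintro y ⟨hne, hor⟩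
      rcases hor with hq | hq
      · by_cases hxm : (x:ℕ) % (n+2) = 0
        · right
          have : (y:ℕ) = 0 := by rw [← hq, qold_val, if_neg hx, if_pos hxm]
          exact Set.mem_singleton_iff.2 (Fin.ext this)
        · left
          have hv : (y:ℕ) = (f (umk n x):ℕ) + (n+2)*((x:ℕ)/(n+2)) := by
            rw [← hq, qold_val, if_neg hx, if_neg hxm]
          refine ⟨f (umk n x), ⟨?_, Or.inl rfl⟩, ?_⟩
          · intro hc
            have h1 := congrArg Fin.val hc
            rw [humk] at h1
            exact hne (Fin.ext (by omega))
          · apply Fin.ext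
            rw [encB_val]
            show (f (umk n x) : ℕ) + (n+2) * ((x:ℕ)/(n+2)) = (y:ℕ)
            omega
      · by_cases hy : (y:ℕ) < n+2
        · exfalso
          have hv : (x:ℕ) = (f (umk n y) : ℕ) := by
            rw [← hq, qold_val, if_pos hy]
          have := (f (umk n y)).isLt
          omega
        · by_cases hym : (y:ℕ) % (n+2) = 0
          · exfalso
            have hx0 : (x:ℕ) = 0 := by
              rw [← hq, qold_val, if_neg hy, if_pos hym]
            omega
          · left
            have hv : (x:ℕ) = (f (umk n y):ℕ) + (n+2)*((y:ℕ)/(n+2)) := by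
              rw [← hq, qold_val, if_neg hy, if_neg hym]
            have e1 : (x:ℕ) % (n+2) = (f (umk n y):ℕ) := by
              rw [hv, Nat.add_mul_mod_self_left, Nat.mod_eq_of_lt (f (umk n y)).isLt]
            have e2 : (x:ℕ) / (n+2) = (y:ℕ)/(n+2) := by
              rw [hv, Nat.add_mul_div_left _ _ (by omega : 0 < n+2),
                Nat.div_eq_of_lt (f (umk n y)).isLt, zero_add]
            have hmady := Nat.mod_add_div (y:ℕ) (n+2)
            refine ⟨umk n y, ⟨?_, Or.inr (Fin.ext (by rw [humk]; exact e1.symm))⟩, ?_⟩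
            · intro hc
              have h1 := congrArg Fin.val hc
              have humky : (umk n y : ℕ) = (y:ℕ) % (n+2) := rfl
              rw [humk, humky] at h1
              exact hne (Fin.ext (by omega))
            · apply Fin.ext
              rw [encB_val]
              show ((y:ℕ) % (n+2)) + (n+2) * ((x:ℕ)/(n+2)) = (y:ℕ)
              rw [e2]
              omega
    calc ((treeGraph (qold n f)).neighborSet x).ncard
        ≤ _ := Set.ncard_le_ncard hsub (Set.toFinite _)
      _ ≤ (encB n ⟨(x:ℕ)/(n+2), hbx⟩ '' (treeGraph f).neighborSet (umk n x)).ncard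
            + ({(0 : Fin (n*n+5*n+4+2))} : Set _).ncard := Set.ncard_union_le _ _
      _ ≤ D + (n+2) := by
          apply add_le_add
          · exact le_trans (Set.ncard_image_le (Set.toFinite _))
              (le_trans (ncard_neighborSet_le_maxDeg _ _) hdeg)
          · rw [Set.ncard_singleton]; omega

lemma qnew_deg (n : ℕ) : maxDeg (treeGraph (qnew n)) ≤ n+4 := by
  apply maxDeg_le_of_forall
  intro x
  by_cases hx : (x:ℕ) < n+2
  · have hsub : (treeGraph (qnew n)).neighborSet x ⊆
        {qnew n x} ∪ ({(⟨(x:ℕ)+1, by have := x.isLt; omega⟩ : Fin (n*n+5*n+4+2))} ∪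
          (encB n ⟨(x:ℕ)+1, by omega⟩ '' Set.univ)) := by
      rintro y ⟨hne, hor⟩
      rcases hor with hq | hq
      · left; exact Set.mem_singleton_iff.2 hq.symm
      · right
        by_cases hy : (y:ℕ) < n+2
        · left
          have hv : (y:ℕ) - 1 = (x:ℕ) := by rw [← hq, qnew_val, if_pos hy]
          have hy0 : (y:ℕ) ≠ 0 := by
            intro h
            apply hne
            apply Fin.ext
            omega
          apply Set.mem_singleton_iff.2
          apply Fin.ext
          show (y:ℕ) = (x:ℕ)+1
          omega
        · right
          have hdy1 : 1 ≤ (y:ℕ)/(n+2) := (Nat.one_le_div_iff (by omega)).2 (by omega)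
          have hv : (y:ℕ)/(n+2) - 1 = (x:ℕ) := by rw [← hq, qnew_val, if_neg hy]
          refine ⟨umk n y, Set.mem_univ _, ?_⟩
          apply Fin.ext
          rw [encB_val]
          show ((y:ℕ) % (n+2)) + (n+2) * ((x:ℕ)+1) = (y:ℕ)
          have e2 : (x:ℕ) + 1 = (y:ℕ)/(n+2) := by omega
          rw [e2]
          exact Nat.mod_add_div (y:ℕ) (n+2)
    calc ((treeGraph (qnew n)).neighborSet x).ncard
        ≤ _ := Set.ncard_le_ncard hsub (Set.toFinite _)
      _ ≤ ({qnew n x} : Set _).ncard +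
            (({(⟨(x:ℕ)+1, by have := x.isLt; omega⟩ : Fin (n*n+5*n+4+2))} : Set _) ∪
              (encB n ⟨(x:ℕ)+1, by omega⟩ '' Set.univ)).ncard := Set.ncard_union_le _ _
      _ ≤ n+4 := by
          have h1 := Set.ncard_union_le
            ({(⟨(x:ℕ)+1, by have := x.isLt; omega⟩ : Fin (n*n+5*n+4+2))} : Set _)
            (encB n ⟨(x:ℕ)+1, by omega⟩ '' Set.univ)
          have h2 : (encB n ⟨(x:ℕ)+1, by omega⟩ '' (Set.univ : Set (Fin (n+2)))).ncard ≤ n+2 := by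
            calc _ ≤ (Set.univ : Set (Fin (n+2))).ncard := Set.ncard_image_le (Set.toFinite _)
              _ = n+2 := by rw [Set.ncard_univ]; simp
          have h3 := Set.ncard_singleton (qnew n x)
          have h4 := Set.ncard_singleton
            (⟨(x:ℕ)+1, by have := x.isLt; omega⟩ : Fin (n*n+5*n+4+2))
          omega
  · have hsub : (treeGraph (qnew n)).neighborSet x ⊆ {qnew n x} := by
      rintro y ⟨hne, hor⟩
      rcases hor with hq | hq
      · exact Set.mem_singleton_iff.2 hq.symm
      · exfalso
        by_cases hy : (y:ℕ) < n+2
        · have hv : (y:ℕ) - 1 = (x:ℕ) := by rw [← hq, qnew_val, if_pos hy]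
          omega
        · have hv : (y:ℕ)/(n+2) - 1 = (x:ℕ) := by rw [← hq, qnew_val, if_neg hy]
          have := div_bound y
          omega
    calc ((treeGraph (qnew n)).neighborSet x).ncard
        ≤ ({qnew n x} : Set _).ncard := Set.ncard_le_ncard hsub (Set.toFinite _)
      _ ≤ n+4 := by rw [Set.ncard_singleton]; omega

/- ### adjacency transfer -/

lemma qold_adj (n : ℕ) (f : Fin (n+2) → Fin (n+2)) (hf0 : f 0 = 0) (B : Fin (n+3))
    {u v : Fin (n+2)} (h : (treeGraph f).Adj u v) :
    (treeGraph (qold n f)).Adj (encB n B u) (encB n B v) := by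
  obtain ⟨hne, hor⟩ := h
  have hEne : encB n B u ≠ encB n B v := by
    intro hc
    apply hne
    have h1 := congrArg Fin.val hc
    rw [encB_val, encB_val] at h1
    exact Fin.ext (by omega)
  refine ⟨hEne, ?_⟩
  have hkey : ∀ a b : Fin (n+2), a ≠ b → f a = b →
      qold n f (encB n B a) = encB n B b := by
    intro a b hab hfab
    apply Fin.ext
    rw [qold_val]
    by_cases hB : (B:ℕ) = 0
    · have hlt' : ((encB n B a : ℕ)) < n+2 := by
        rw [encB_val, hB, Nat.mul_zero]
        have := a.isLt
        omega
      rw [if_pos hlt', umk_encB, hfab, encB_val, hB]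
      omega
    · have hge : ¬ ((encB n B a : ℕ)) < n+2 := by
        rw [encB_val]
        have h3 : (n+2)*1 ≤ (n+2)*(B:ℕ) := Nat.mul_le_mul_left _ (by omega)
        omega
      rw [if_neg hge]
      have ha0 : a ≠ 0 := by
        intro hh
        subst hh
        rw [hf0] at hfab
        exact hab hfab
      have hmodne : ¬ ((encB n B a:ℕ)) % (n+2) = 0 := by
        rw [encB_mod]
        intro hh
        exact ha0 (Fin.ext hh)
      rw [if_neg hmodne, umk_encB, hfab, encB_div, encB_val]
  rcases hor with h | h
  · exact Or.inl (hkey u v hne h)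
  · exact Or.inr (hkey v u hne.symm h)

lemma qnew_adj (n : ℕ) (u c : Fin (n+2)) :
    (treeGraph (qnew n)).Adj (encB n ⟨(u:ℕ)+1, by omega⟩ c) (encB n ⟨0, by omega⟩ u) := by
  have hval : ((encB n ⟨(u:ℕ)+1, by omega⟩ c : ℕ)) = (c:ℕ) + (n+2)*((u:ℕ)+1) := rfl
  have hmul : n+2 ≤ (n+2)*((u:ℕ)+1) := Nat.le_mul_of_pos_right _ (by omega)
  have hge : ¬ ((encB n ⟨(u:ℕ)+1, by omega⟩ c : ℕ)) < n+2 := by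
    rw [hval]; omega
  have h4 : ((encB n ⟨0, by omega⟩ u : Fin (n*n+5*n+4+2)) : ℕ) = (u:ℕ) := by
    show (u:ℕ) + (n+2)*0 = (u:ℕ)
    omega
  refine ⟨?_, Or.inl ?_⟩
  · intro hc
    have h1 := congrArg Fin.val hc
    rw [hval, h4] at h1
    have h3 := u.isLt
    omega
  · apply Fin.ext
    rw [qnew_val, if_neg hge]
    have e1 : ((encB n ⟨(u:ℕ)+1, by omega⟩ c : ℕ)) / (n+2) = (u:ℕ)+1 :=
      encB_div n ⟨(u:ℕ)+1, by omega⟩ c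
    rw [e1, h4]
    omega
/- ### the construction step -/

lemma step_lemma (k n : ℕ) (p : Fin (k+1) → Fin (n+2) → Fin (n+2)) (D : ℕ)
    (h0 : ∀ i, p i 0 = 0) (hlt : ∀ i v, v ≠ 0 → ((p i v : ℕ)) < (v:ℕ))
    (hdeg : ∀ i, maxDeg (treeGraph (p i)) ≤ D)
    (hnc : ¬ HasCoopColoring (fun i => treeGraph (p i))) :
    ∃ q : Fin (k+2) → Fin (n*n+5*n+4+2) → Fin (n*n+5*n+4+2),
      (∀ i, q i 0 = 0) ∧
      (∀ i v, v ≠ 0 → ((q i v : ℕ)) < (v:ℕ)) ∧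
      (∀ i, maxDeg (treeGraph (q i)) ≤ max (D + (n+2)) (n+4)) ∧
      ¬ HasCoopColoring (fun i => treeGraph (q i)) := by
  refine ⟨Fin.snoc (fun i => qold n (p i)) (qnew n), ?_, ?_, ?_, ?_⟩
  · intro i
    induction i using Fin.lastCases with
    | last => rw [Fin.snoc_last]; exact qnew_zero n
    | cast i => rw [Fin.snoc_castSucc]; exact qold_zero n (p i) (h0 i)
  · intro i
    induction i using Fin.lastCases with
    | last => rw [Fin.snoc_last]; exact qnew_lt n
    | cast i => rw [Fin.snoc_castSucc]; exact qold_lt n (p i) (hlt i)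
  · intro i
    induction i using Fin.lastCases with
    | last =>
      rw [Fin.snoc_last]
      exact le_trans (qnew_deg n) (le_max_right _ _)
    | cast i =>
      rw [Fin.snoc_castSucc]
      exact le_trans (qold_deg n (p i) D (hdeg i)) (le_max_left _ _)
  · rintro ⟨I, hind, hcov⟩
    have hindL : IndepIn (treeGraph (qnew n)) (I (Fin.last (k+1))) := by
      have h := hind (Fin.last (k+1))
      simpa only [Fin.snoc_last] using h
    -- find a missed blob
    have hblob : ∃ B : Fin (n+3), ∀ c : Fin (n+2), encB n B c ∉ I (Fin.last (k+1)) := by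
      by_cases hex : ∃ u : Fin (n+2), encB n ⟨0, by omega⟩ u ∈ I (Fin.last (k+1))
      · obtain ⟨u, hu⟩ := hex
        refine ⟨⟨(u:ℕ)+1, by omega⟩, fun c hc => ?_⟩
        exact hindL hc hu (qnew_adj n u c)
      · exact ⟨⟨0, by omega⟩, fun c hc => hex ⟨c, hc⟩⟩
    obtain ⟨B, hmiss⟩ := hblob
    apply hnc
    refine ⟨fun i => {v | encB n B v ∈ I i.castSucc}, fun i => ?_, ?_⟩
    · intro u hu v hv hadj
      refine hind i.castSucc hu hv ?_
      have h := qold_adj n (p i) (h0 i) B hadj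
      simpa only [Fin.snoc_castSucc] using h
    · apply Set.eq_univ_iff_forall.2
      intro v
      rw [Set.mem_iUnion]
      have hmem : encB n B v ∈ ⋃ j, I j := by rw [hcov]; trivial
      rw [Set.mem_iUnion] at hmem
      obtain ⟨j, hj⟩ := hmem
      by_cases hjL : j = Fin.last (k+1)
      · exact absurd hj (hjL ▸ hmiss v)
      · obtain ⟨j', rfl⟩ := Fin.exists_castSucc_eq.2 hjL
        exact ⟨j', hj⟩

/- ### the induction -/

lemma aux_system : ∀ k : ℕ, ∃ n : ℕ, ∃ p : Fin (k+1) → Fin (n+2) → Fin (n+2),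
    (∀ i, p i 0 = 0) ∧ (∀ i v, v ≠ 0 → ((p i v : ℕ)) < (v:ℕ)) ∧
    (∀ i, maxDeg (treeGraph (p i)) ≤ 2^(2^k)) ∧
    (n + 2 + 2^(2^k) ≤ 2^(2^(k+1))) ∧
    ¬ HasCoopColoring (fun i => treeGraph (p i)) := by
  intro k
  induction k with
  | zero =>
    refine ⟨0, fun _ _ => 0, fun i => rfl, ?_, ?_, by norm_num, ?_⟩
    · intro i v hv
      have h1 : (v:ℕ) ≠ 0 := fun h => hv (Fin.ext h)
      show (0:ℕ) < (v:ℕ)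
      omega
    · intro i
      calc maxDeg _ ≤ Fintype.card (Fin (0+2)) := maxDeg_le_card _
        _ ≤ 2^2^0 := by simp
    · rintro ⟨I, hind, hcov⟩
      have hmem : ∀ x : Fin (0+2), x ∈ I 0 := by
        intro x
        have : x ∈ ⋃ j, I j := by rw [hcov]; trivial
        rw [Set.mem_iUnion] at this
        obtain ⟨j, hj⟩ := this
        have hj0 : j = 0 := Fin.ext (by have := j.isLt; omega)
        rwa [hj0] at hj
      exact hind 0 (hmem 0) (hmem 1) ⟨by decide, Or.inr rfl⟩
  | succ k ih =>
    obtain ⟨n, p, h0, hlt, hdeg, hbound, hnc⟩ := ih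
    obtain ⟨q, hq0, hqlt, hqdeg, hqnc⟩ := step_lemma k n p (2^(2^k)) h0 hlt hdeg hnc
    have hM : (2:ℕ) ≤ 2^(2^k) := by
      calc (2:ℕ) = 2^1 := rfl
        _ ≤ 2^(2^k) := Nat.pow_le_pow_right (by norm_num) Nat.one_le_two_pow
    have e1 : (2:ℕ)^(2^(k+1)) = 2^(2^k) * 2^(2^k) := by
      rw [pow_succ, pow_mul]
      ring
    refine ⟨n*n+5*n+4, q, hq0, hqlt, ?_, ?_, hqnc⟩
    · intro i
      refine le_trans (hqdeg i) ?_
      rw [max_le_iff, e1]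
      constructor <;> nlinarith
    · have e2 : (2:ℕ)^(2^(k+2)) = 2^(2^(k+1)) * 2^(2^(k+1)) := by
        rw [pow_succ, pow_mul]
        ring
      rw [e2, e1]
      rw [e1] at hbound
      nlinarith [Nat.mul_le_mul hbound hbound]


/-- For every `m ≥ 2` there are `m` trees on a common finite vertex set, each
of maximum degree at most `2 ^ 2 ^ (m - 1)`, with no cooperative coloring. -/
theorem exists_trees_no_coop_coloring (m : ℕ) (hm : 2 ≤ m) :
    ∃ (n : ℕ) (T : Fin m → SimpleGraph (Fin n)),
      (∀ i, (T i).IsTree) ∧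
      (∀ i, maxDeg (T i) ≤ 2 ^ 2 ^ (m - 1)) ∧
      ¬ HasCoopColoring T := by
  obtain ⟨k, rfl⟩ : ∃ k, m = k + 1 := ⟨m - 1, by omega⟩
  obtain ⟨n, p, h0, hlt, hdeg, -, hnc⟩ := aux_system k
  refine ⟨n + 2, fun i => treeGraph (p i), ?_, ?_, hnc⟩
  · intro i
    exact treeGraph_isTree (p i) (h0 i) (hlt i)
  · intro i
    simpa using hdeg i
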